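/- Let (R, ⊕, ≤) be a lattice ordered monoid whose order is a complete lattice, let D = (V, A) be a finite digraph with arc resources (x_a)_{a∈A} in R, and fix a destination d ∈ V. Define the sequence (b^n)_{n≥0} in R^V by b^0_d = 0, b^0_v = ⊤ for v ≠ d, b^{n+1}_d = 0, and b^{n+1}_v = b^n_v ⊓ ⨅_{a=(v,u)∈δ⁺(v)} (x_a ⊕ b^n_u) for v ≠ d. Then every solution b ∈ R^V of the equation b_d = 0, b_v = b_v ⊓ ⨅_{a=(v,u)∈δ⁺(v)} (x_a ⊕ b_u) (v ≠ d) satisfies b_v ≤ b^n_v for every vertex v and every n ∈ ℕ; consequently, the greatest solution b† and the componentwise infimum b^∞_v := ⨅_{n∈ℕ} b^n_v satisfy b†_v ≤ b^∞_v ≤ b^n_v for all v and n. -/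

import Mathlib

/-- A digraph with vertex set `V` and arc set `A`: each arc has a tail and a head. -/
structure Digraph' (V A : Type*) where
  tail : A → V
  head : A → V

/-- The sequence `(bⁿ)` of the generalized Ford-Bellman algorithm:
`b⁰ d = 0`, `b⁰ v = ⊤` for `v ≠ d`, `bⁿ⁺¹ d = 0`, and
`bⁿ⁺¹ v = bⁿ v ⊓ ⨅_{a ∈ δ⁺(v)} (x a + bⁿ (head a))` for `v ≠ d`. -/
def bSeq {V A R : Type*} [DecidableEq V] [CompleteLattice R] [AddMonoid R]
    (D : Digraph' V A) (x : A → R) (d : V) : ℕ → V → R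
  | 0 => fun v => if v = d then 0 else ⊤
  | n + 1 => fun v => if v = d then 0
      else bSeq D x d n v ⊓ ⨅ a ∈ {a : A | D.tail a = v}, (x a + bSeq D x d n (D.head a))

/-- every solution `b` of the generalized dynamic programming equation
satisfies `b v ≤ bⁿ v` for all `v` and `n`; consequently the greatest solution `b†`
and `b^∞ v = ⨅ₙ bⁿ v` satisfy `b† v ≤ b^∞ v ≤ bⁿ v` for all `v` and `n`. -/
theorem stmt1 {V A R : Type*} [Fintype V] [Fintype A] [DecidableEq V]
    [CompleteLattice R] [AddMonoid R]
    [CovariantClass R R (· + ·) (· ≤ ·)]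
    [CovariantClass R R (Function.swap (· + ·)) (· ≤ ·)]
    (D : Digraph' V A) (x : A → R) (d : V) :
    (∀ b : V → R,
      (b d = 0 ∧ ∀ v, v ≠ d →
        b v = b v ⊓ ⨅ a ∈ {a : A | D.tail a = v}, (x a + b (D.head a))) →
      ∀ (n : ℕ) (v : V), b v ≤ bSeq D x d n v) ∧
    (∀ bdag : V → R,
      IsGreatest {b : V → R | b d = 0 ∧ ∀ v, v ≠ d →
        b v = b v ⊓ ⨅ a ∈ {a : A | D.tail a = v}, (x a + b (D.head a))} bdag →
      ∀ (v : V) (n : ℕ),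
        bdag v ≤ (⨅ m : ℕ, bSeq D x d m v) ∧ (⨅ m : ℕ, bSeq D x d m v) ≤ bSeq D x d n v) := by
  have main : ∀ b : V → R,
      (b d = 0 ∧ ∀ v, v ≠ d →
        b v = b v ⊓ ⨅ a ∈ {a : A | D.tail a = v}, (x a + b (D.head a))) →
      ∀ (n : ℕ) (v : V), b v ≤ bSeq D x d n v := by
    intro b ⟨hd, hv⟩ n
    induction n with
    | zero =>
      intro v
      simp only [bSeq]
      split
      · next h => simp [h, hd]
      · exact le_top
    | succ n ih =>
      intro v
      simp only [bSeq]
      split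
      · next h => simp [h, hd]
      · next h =>
        rw [hv v h]
        refine inf_le_inf (ih v) ?_
        refine le_iInf fun a => le_iInf fun ha => ?_
        refine le_trans (iInf_le_of_le a (iInf_le _ ha)) ?_
        exact add_le_add_right (ih _) _
  refine ⟨main, fun bdag hg v n => ?_⟩
  constructor
  · exact le_iInf fun m => main bdag hg.1 m v
  · exact iInf_le _ n
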